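/- Let F be a finite field with q elements, let G be a finite group of order n, let A = MonoidAlgebra F G, and let M be a left ideal of A such that every m ∈ M satisfies ∑_{g ∈ G} m g = 0 (the coefficients of every element of M sum to zero). Then for every k ∈ A there exists k' ∈ A with wt(k') ≤ ⌊n(q−1)/q⌋ such that k' * m = k * m for all m ∈ M. -/

import Mathlib

/-- Let `F` be a finite field with `q` elements, `G` a finite group of
order `n`, `A = MonoidAlgebra F G`, and `M` a left ideal of `A` all of whose elements have
coefficients summing to zero. Then every `k ∈ A` can be replaced by some `k'` of weight at
most `⌊n(q−1)/q⌋` acting identically on `M`. -/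
theorem stmt18 {F : Type} [Field F] [Fintype F] {G : Type} [Group G] [Fintype G]
    (M : Submodule (MonoidAlgebra F G) (MonoidAlgebra F G))
    (hM : ∀ m ∈ M, ∑ g : G, (m : MonoidAlgebra F G).coeff g = 0) :
    ∀ k : MonoidAlgebra F G, ∃ k' : MonoidAlgebra F G,
      (k' : MonoidAlgebra F G).coeff.support.card ≤
        Fintype.card G * (Fintype.card F - 1) / Fintype.card F ∧
      ∀ m ∈ M, k' * m = k * m := by
  intro k
  classical
  set q := Fintype.card F with hq
  set n := Fintype.card G with hn
  have hq0 : 0 < q := Fintype.card_pos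
  -- the all-ones element J
  set J : MonoidAlgebra F G := ∑ g : G, MonoidAlgebra.single g 1 with hJ
  have hJapp : ∀ h : G, J.coeff h = 1 := by
    intro h
    rw [hJ, MonoidAlgebra.coeff_sum, Finsupp.finset_sum_apply]
    rw [Finset.sum_eq_single h]
    · simp [MonoidAlgebra.coeff_single]
    · intro b _ hb; simp [MonoidAlgebra.coeff_single, Finsupp.single_apply, hb]
    · simp
  have hJmul : ∀ m ∈ M, J * m = 0 := by
    intro m hm
    ext h
    rw [hJ, Finset.sum_mul, MonoidAlgebra.coeff_sum, Finsupp.finset_sum_apply]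
    have : ∀ g : G, (MonoidAlgebra.single g (1:F) * m : MonoidAlgebra F G).coeff h
        = m.coeff (g⁻¹ * h) := by
      intro g
      rw [MonoidAlgebra.coeff_single_mul_apply]
      ring
    rw [Finset.sum_congr rfl fun g _ => this g]
    have := hM m hm
    calc ∑ g : G, m.coeff (g⁻¹ * h)
        = ∑ g : G, m.coeff g := by
          apply Fintype.sum_equiv ((Equiv.inv G).trans (Equiv.mulRight h))
          intro x; rfl
      _ = 0 := this
  -- pigeonhole: a value c of k taken at least n/q times
  have hsum : n = ∑ c : F, (Finset.univ.filter fun g : G => k.coeff g = c).card := by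
    rw [hn, ← Finset.card_univ]
    exact Finset.card_eq_sum_card_fiberwise (fun x _ => Finset.mem_univ _)
  obtain ⟨c, hc⟩ : ∃ c : F, n ≤ q * (Finset.univ.filter fun g : G => k.coeff g = c).card := by
    by_contra hcon
    push_neg at hcon
    have : ∑ c : F, q * (Finset.univ.filter fun g : G => k.coeff g = c).card
        < ∑ _c : F, n := by
      apply Finset.sum_lt_sum_of_nonempty Finset.univ_nonempty
      intro c _; exact hcon c
    rw [← Finset.mul_sum, ← hsum, Finset.sum_const, Finset.card_univ, ← hq, smul_eq_mul,
      mul_comm] at this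
    exact lt_irrefl _ this
  set s := (Finset.univ.filter fun g : G => k.coeff g = c).card with hs
  refine ⟨k - c • J, ?_, ?_⟩
  · -- weight bound
    have hsub : (k - c • J : MonoidAlgebra F G).coeff.support ⊆
        Finset.univ.filter fun g : G => ¬ (k.coeff g = c) := by
      intro g hg
      simp only [Finset.mem_filter, Finset.mem_univ, true_and]
      intro hkg
      rw [Finsupp.mem_support_iff] at hg
      apply hg
      show k.coeff g - (c • J).coeff g = 0
      rw [MonoidAlgebra.coeff_smul_apply, hJapp g, hkg, smul_eq_mul, mul_one, sub_self]
    have hcard : (k - c • J : MonoidAlgebra F G).coeff.support.card ≤ n - s := by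
      have := Finset.card_le_card hsub
      rwa [Finset.filter_not, Finset.card_sdiff_of_subset (Finset.filter_subset _ _),
        Finset.card_univ, ← hn, ← hs] at this
    refine hcard.trans ?_
    rw [Nat.le_div_iff_mul_le hq0]
    have hsn : s ≤ n := by
      rw [hs, hn, ← Finset.card_univ]; exact Finset.card_filter_le _ _
    calc (n - s) * q = n * q - s * q := by rw [Nat.sub_mul]
      _ ≤ n * q - n := by
          apply Nat.sub_le_sub_left
          rwa [mul_comm] at hc
      _ = n * (q - 1) := by rw [Nat.mul_sub, Nat.mul_one]
  · intro m hm
    have : (c • J) * m = 0 := by rw [smul_mul_assoc, hJmul m hm, smul_zero]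
    rw [sub_mul, this, sub_zero]
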